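/- Let 0 < α < 1, λ ∈ ℝ, and x > 0. Then (1/Γ(1−α))·∫_0^x (x−u)^{−α} u^{α−1} E_{α,α}(λ u^α) du = E_{α,1}(λ x^α). -/

import Mathlib

open MeasureTheory intervalIntegral

private lemma beta_integrable {p q a : ℝ} (hp : 0 < p) (hq : 0 < q) (ha : 0 < a) :
    IntervalIntegrable (fun u => u ^ (p - 1) * (a - u) ^ (q - 1)) volume 0 a := by
  have left : IntervalIntegrable (fun u => u ^ (p - 1) * (a - u) ^ (q - 1)) volume 0 (a / 2) := by
    apply (intervalIntegrable_rpow' (by linarith)).mul_continuousOn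
    apply ContinuousOn.rpow_const (continuousOn_const.sub continuousOn_id)
    intro u hu
    rw [Set.uIcc_of_le (by linarith)] at hu
    exact Or.inl (ne_of_gt (by simp only [Pi.sub_apply, id_eq]; linarith [hu.2]))
  have comp' : IntervalIntegrable (fun u : ℝ => (a - u) ^ (q - 1)) volume (a / 2) a := by
    have base : IntervalIntegrable (fun v : ℝ => v ^ (q - 1)) volume 0 (a / 2) :=
      intervalIntegrable_rpow' (by linarith)
    have comp := base.comp_sub_left a
    rw [show a - 0 = a by ring, show a - a / 2 = a / 2 by ring] at comp
    exact comp.symm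
  have right : IntervalIntegrable (fun u => u ^ (p - 1) * (a - u) ^ (q - 1)) volume (a / 2) a := by
    apply comp'.continuousOn_mul
    apply ContinuousOn.rpow_const continuousOn_id
    intro u hu
    rw [Set.uIcc_of_le (by linarith)] at hu
    exact Or.inl (ne_of_gt (by simp only [id_eq]; linarith [hu.1]))
  exact left.trans right

private lemma beta_value {p q a : ℝ} (hp : 0 < p) (hq : 0 < q) (ha : 0 < a) :
    ∫ u in (0:ℝ)..a, u ^ (p - 1) * (a - u) ^ (q - 1)
      = a ^ (p + q - 1) * (Real.Gamma p * Real.Gamma q / Real.Gamma (p + q)) := by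
  have hc : (∫ u in (0:ℝ)..a, ((u ^ (p - 1) * (a - u) ^ (q - 1) : ℝ) : ℂ))
      = ∫ u in (0:ℝ)..a, (u : ℂ) ^ ((p : ℂ) - 1) * ((a : ℂ) - u) ^ ((q : ℂ) - 1) := by
    apply intervalIntegral.integral_congr
    intro u hu
    rw [Set.uIcc_of_le ha.le] at hu
    simp only [Complex.ofReal_mul]
    rw [Complex.ofReal_cpow hu.1, Complex.ofReal_cpow (by linarith [hu.2] : (0:ℝ) ≤ a - u)]
    push_cast
    ring
  have hΓ : Complex.Gamma ((p : ℂ) + q) ≠ 0 := by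
    apply Complex.Gamma_ne_zero_of_re_pos
    rw [Complex.add_re, Complex.ofReal_re, Complex.ofReal_re]
    positivity
  have hbeta := Complex.Gamma_mul_Gamma_eq_betaIntegral (s := (p : ℂ)) (t := (q : ℂ))
    (by simpa using hp) (by simpa using hq)
  have hB : Complex.betaIntegral p q
      = Complex.Gamma p * Complex.Gamma q / Complex.Gamma ((p : ℂ) + q) := by
    rw [eq_div_iff hΓ, hbeta]; ring
  have hscaled := Complex.betaIntegral_scaled (p : ℂ) (q : ℂ) ha
  apply Complex.ofReal_injective
  rw [intervalIntegral.integral_ofReal] at hc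
  rw [hc, hscaled, hB, Complex.ofReal_mul, Complex.ofReal_cpow ha.le, Complex.ofReal_div,
    Complex.ofReal_mul, ← Complex.Gamma_ofReal, ← Complex.Gamma_ofReal, ← Complex.Gamma_ofReal]
  push_cast
  ring

private lemma ML_summable {α : ℝ} (hα0 : 0 < α) (hα1 : α < 1) {y : ℝ} (hy : 0 ≤ y) :
    Summable (fun k : ℕ => y ^ k / Real.Gamma (α * k + 1)) := by
  rcases eq_or_lt_of_le hy with h0 | hy
  · apply summable_of_ne_finset_zero (s := {0})
    intro k hk
    simp only [Finset.mem_singleton] at hk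
    simp [← h0, zero_pow hk]
  refine summable_of_ratio_norm_eventually_le (r := 1 / 2) (by norm_num) ?_
  have htend : Filter.Tendsto (fun k : ℕ => α * k + 1) Filter.atTop Filter.atTop :=
    Filter.tendsto_atTop_add_const_right _ 1
      (Filter.Tendsto.const_mul_atTop hα0 tendsto_natCast_atTop_atTop)
  filter_upwards [htend.eventually_ge_atTop (max 2 ((4 * y + 1) ^ (1 / α)))] with k hk
  set s : ℝ := α * k + 1 with hs
  have hs2 : (2 : ℝ) ≤ s := le_trans (le_max_left _ _) hk
  have hsp : (0 : ℝ) < s := by linarith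
  have hsa : (0 : ℝ) < s + α := by linarith
  have hGs : 0 < Real.Gamma s := Real.Gamma_pos_of_pos hsp
  have hGsa : 0 < Real.Gamma (s + α) := Real.Gamma_pos_of_pos hsa
  set A : ℝ := (s + α) ^ (1 - α) with hA_def
  have hA0 : 0 < A := Real.rpow_pos_of_pos hsa _
  -- log-convexity : s Γ(s) ≤ Γ(s+α) A
  have conv := Real.Gamma_mul_add_mul_le_rpow_Gamma_mul_rpow_Gamma
    (s := s + α) (t := s + α + 1) (a := α) (b := 1 - α) hsa (by linarith) hα0 (by linarith) (by ring)
  rw [show α * (s + α) + (1 - α) * (s + α + 1) = s + 1 by ring] at conv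
  have key : s * Real.Gamma s ≤ Real.Gamma (s + α) * A := by
    have h1 : Real.Gamma (s + 1) = s * Real.Gamma s := Real.Gamma_add_one hsp.ne'
    have h2 : Real.Gamma (s + α + 1) = (s + α) * Real.Gamma (s + α) :=
      Real.Gamma_add_one hsa.ne'
    calc s * Real.Gamma s = Real.Gamma (s + 1) := h1.symm
      _ ≤ Real.Gamma (s + α) ^ α * Real.Gamma (s + α + 1) ^ (1 - α) := conv
      _ = Real.Gamma (s + α) * A := by
          rw [h2, Real.mul_rpow hsa.le hGsa.le,
            show Real.Gamma (s + α) ^ α * ((s + α) ^ (1 - α) * Real.Gamma (s + α) ^ (1 - α))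
              = Real.Gamma (s + α) ^ α * Real.Gamma (s + α) ^ (1 - α) * (s + α) ^ (1 - α)
              from by ring,
            ← Real.rpow_add hGsa]
          norm_num
          exact Or.inl hA_def.symm
  -- s^α is large
  have hsαpos : (0 : ℝ) < s ^ α := Real.rpow_pos_of_pos hsp _
  have hsα : 4 * y + 1 ≤ s ^ α := by
    have h1 : (4 * y + 1) ^ (1 / α) ≤ s := le_trans (le_max_right _ _) hk
    have h2 : ((4 * y + 1) ^ (1 / α)) ^ α ≤ s ^ α :=
      Real.rpow_le_rpow (Real.rpow_nonneg (by linarith) _) h1 hα0.le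
    rwa [← Real.rpow_mul (by linarith), one_div_mul_cancel hα0.ne', Real.rpow_one] at h2
  -- A ≤ 2 * (s / s^α)
  have hA : 2 * y * A ≤ s := by
    have h1 : A ≤ 2 * (s / s ^ α) := by
      calc A ≤ (2 * s) ^ (1 - α) := Real.rpow_le_rpow hsa.le (by linarith) (by linarith)
        _ = 2 ^ (1 - α) * s ^ (1 - α) := Real.mul_rpow (by norm_num) hsp.le
        _ ≤ 2 * s ^ (1 - α) := by
            apply mul_le_mul_of_nonneg_right _ (Real.rpow_nonneg hsp.le _)
            calc (2:ℝ) ^ (1 - α) ≤ 2 ^ (1:ℝ) :=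
                Real.rpow_le_rpow_of_exponent_le one_le_two (by linarith)
              _ = 2 := Real.rpow_one 2
        _ = 2 * (s / s ^ α) := by rw [Real.rpow_sub hsp, Real.rpow_one]
    calc 2 * y * A ≤ 2 * y * (2 * (s / s ^ α)) := by
          apply mul_le_mul_of_nonneg_left h1 (by positivity)
      _ = 4 * y * (s / s ^ α) := by ring
      _ ≤ s ^ α * (s / s ^ α) := by
          apply mul_le_mul_of_nonneg_right (by linarith) (by positivity)
      _ = s := by field_simp
  -- conclude
  have h2y : 2 * y * Real.Gamma s ≤ Real.Gamma (s + α) := by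
    refine le_of_mul_le_mul_right ?_ hA0
    have t1 : 2 * y * A * Real.Gamma s ≤ s * Real.Gamma s :=
      mul_le_mul_of_nonneg_right hA hGs.le
    nlinarith [key]
  have hidx : α * ((k : ℕ) + 1 : ℕ) + 1 = s + α := by push_cast [hs]; ring
  rw [hidx, Real.norm_of_nonneg (by positivity), Real.norm_of_nonneg (by positivity)]
  calc y ^ (k + 1) / Real.Gamma (s + α) ≤ y ^ (k + 1) / (2 * y * Real.Gamma s) := by
        apply div_le_div_of_nonneg_left (by positivity) (by positivity) h2y
    _ = 1 / 2 * (y ^ k / Real.Gamma s) := by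
        rw [pow_succ]
        field_simp

/-- Two-parameter Mittag-Leffler function (real version):
`E_{α,β}(x) = ∑ₖ x^k / Γ(αk + β)`. -/
noncomputable def ML (α β x : ℝ) : ℝ := ∑' k : ℕ, x ^ k / Real.Gamma (α * k + β)

/-- **Riemann–Liouville fractional integral of the Mittag-Leffler kernel.**
For `0 < α < 1`, `λ ∈ ℝ` and `x > 0`:
`(1/Γ(1-α)) ∫_0^x (x-u)^{-α} u^{α-1} E_{α,α}(λ u^α) du = E_{α,1}(λ x^α)`. -/
theorem riemannLiouville_integral_mittagLeffler (α lam x : ℝ)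
    (hα0 : 0 < α) (hα1 : α < 1) (hx : 0 < x) :
    (1 / Real.Gamma (1 - α)) *
        (∫ u in (0 : ℝ)..x, (x - u) ^ (-α) * u ^ (α - 1) * ML α α (lam * u ^ α)) =
      ML α 1 (lam * x ^ α) := by
  have hq : (0 : ℝ) < 1 - α := by linarith
  have hGq : 0 < Real.Gamma (1 - α) := Real.Gamma_pos_of_pos hq
  have hpk : ∀ k : ℕ, (0 : ℝ) < α * k + α := fun k => by positivity
  have hGa : ∀ k : ℕ, 0 < Real.Gamma (α * k + α) := fun k => Real.Gamma_pos_of_pos (hpk k)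
  have hG1 : ∀ k : ℕ, 0 < Real.Gamma (α * k + 1) := fun k =>
    Real.Gamma_pos_of_pos (by positivity)
  set f : ℕ → ℝ → ℝ := fun k u =>
    lam ^ k / Real.Gamma (α * k + α) * (u ^ (α * k + α - 1) * (x - u) ^ (-α)) with hf
  -- integral value, for any coefficient base c
  have hval : ∀ (c : ℝ) (k : ℕ),
      (∫ u in Set.Ioc 0 x, c ^ k / Real.Gamma (α * k + α) *
          (u ^ (α * k + α - 1) * (x - u) ^ (-α)))
        = Real.Gamma (1 - α) * ((c * x ^ α) ^ k / Real.Gamma (α * k + 1)) := by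
    intro c k
    have hb := beta_value (p := α * k + α) (q := 1 - α) (hpk k) hq hx
    rw [show (1 : ℝ) - α - 1 = -α by ring, show α * (k : ℝ) + α + (1 - α) - 1 = α * k by ring,
      show α * (k : ℝ) + α + (1 - α) = α * k + 1 by ring] at hb
    rw [MeasureTheory.integral_const_mul, ← intervalIntegral.integral_of_le hx.le, hb]
    have hxk : (x ^ α) ^ k = x ^ (α * k) := by
      rw [← Real.rpow_natCast (x ^ α) k, ← Real.rpow_mul hx.le]
    rw [mul_pow, hxk]
    field_simp
  -- integrability
  have hint : ∀ k : ℕ, MeasureTheory.Integrable (f k) (volume.restrict (Set.Ioc 0 x)) := by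
    intro k
    have hb := beta_integrable (p := α * k + α) (q := 1 - α) (hpk k) hq hx
    rw [show (1 : ℝ) - α - 1 = -α by ring] at hb
    exact ((intervalIntegrable_iff_integrableOn_Ioc_of_le hx.le).mp hb).const_mul
      (lam ^ k / Real.Gamma (α * k + α))
  -- norms
  have hnorm : ∀ k : ℕ, (∫ u in Set.Ioc 0 x, ‖f k u‖)
      = Real.Gamma (1 - α) * ((|lam| * x ^ α) ^ k / Real.Gamma (α * k + 1)) := by
    intro k
    rw [← hval |lam| k]
    apply MeasureTheory.setIntegral_congr_fun measurableSet_Ioc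
    intro u hu
    simp only [hf, Real.norm_eq_abs, abs_mul, abs_div, abs_pow,
      abs_of_pos (hGa k)]
    rw [abs_of_nonneg (Real.rpow_nonneg hu.1.le _),
      abs_of_nonneg (Real.rpow_nonneg (by linarith [hu.2] : (0:ℝ) ≤ x - u) _)]
  have hsum : Summable fun k : ℕ => ∫ u in Set.Ioc 0 x, ‖f k u‖ := by
    simp only [hnorm]
    exact (ML_summable hα0 hα1 (by positivity)).mul_left _
  have hswap := MeasureTheory.integral_tsum_of_summable_integral_norm hint hsum
  -- pointwise expansion of the integrand
  have hcongr : (∫ u in Set.Ioc 0 x, (x - u) ^ (-α) * u ^ (α - 1) * ML α α (lam * u ^ α))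
      = ∫ u in Set.Ioc 0 x, ∑' k, f k u := by
    apply MeasureTheory.setIntegral_congr_fun measurableSet_Ioc
    intro u hu
    show (x - u) ^ (-α) * u ^ (α - 1) * ML α α (lam * u ^ α) = ∑' k, f k u
    rw [show ML α α (lam * u ^ α) = ∑' k : ℕ, (lam * u ^ α) ^ k / Real.Gamma (α * k + α) from rfl,
      ← tsum_mul_left]
    apply tsum_congr
    intro k
    have huk : (u ^ α) ^ k = u ^ (α * k) := by
      rw [← Real.rpow_natCast (u ^ α) k, ← Real.rpow_mul hu.1.le]
    have hsplit : u ^ (α * (k : ℝ) + α - 1) = u ^ (α * k) * u ^ (α - 1) := by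
      rw [← Real.rpow_add hu.1]
      ring_nf
    simp only [hf]
    rw [mul_pow, huk, hsplit]
    field_simp
  rw [intervalIntegral.integral_of_le hx.le, hcongr, ← hswap]
  have hlast : ∀ k : ℕ, (∫ u in Set.Ioc 0 x, f k u)
      = Real.Gamma (1 - α) * ((lam * x ^ α) ^ k / Real.Gamma (α * k + 1)) := fun k =>
    hval lam k
  rw [tsum_congr hlast, tsum_mul_left,
    show ML α 1 (lam * x ^ α) = ∑' k : ℕ, (lam * x ^ α) ^ k / Real.Gamma (α * k + 1) from rfl]
  field_simp
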